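/- (Stenger's lemma.) Let S̃ be a selfadjoint operator in a complex Hilbert space H and let H₀ be a closed subspace of H whose orthogonal complement is finite-dimensional. Then the compression of S̃ to H₀, i.e. the operator in H₀ with domain dom S̃ ∩ H₀ acting as x ↦ P_{H₀}(S̃x), is a selfadjoint operator in the Hilbert space H₀. -/

import Mathlib

set_option synthInstance.maxHeartbeats 1000000

open scoped ComplexInnerProductSpace

variable {H : Type*} [NormedAddCommGroup H] [InnerProductSpace ℂ H] [CompleteSpace H]

/-- The compression of an operator `T` in `H` to a closed subspace `K`: the operator in the
Hilbert space `K` with domain `dom T ∩ K` acting as `x ↦ P_K (T x)`. -/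
noncomputable def compression (K : Submodule ℂ H) [CompleteSpace K] (T : H →ₗ.[ℂ] H) :
    (↥K) →ₗ.[ℂ] (↥K) where
  domain := T.domain.comap K.subtype
  toFun := (K.orthogonalProjection).toLinearMap ∘ₗ T.toFun ∘ₗ
    ((K.subtype.domRestrict (T.domain.comap K.subtype)).codRestrict T.domain fun x => x.2)

lemma compression_apply (K : Submodule ℂ H) [CompleteSpace K] (T : H →ₗ.[ℂ] H)
    (x : ↥(compression K T).domain) :
    compression K T x = Submodule.orthogonalProjection K (T.toFun ⟨(x : H), x.2⟩) := rfl

/-- A linear right inverse, with values in `dom T`, of the orthogonal projection onto a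
finite-dimensional subspace `(H₀)ᗮ`, when `dom T` is dense. -/
lemma exists_sigma (St : H →ₗ.[ℂ] H) (H₀ : Submodule ℂ H)
    (hfin : FiniteDimensional ℂ ↥H₀ᗮ) (hdSt : Dense (St.domain : Set H)) :
    ∃ σ : ↥H₀ᗮ →ₗ[ℂ] ↥St.domain,
      ∀ y, Submodule.orthogonalProjection H₀ᗮ ((σ y : H)) = y := by
  set p : ↥St.domain →ₗ[ℂ] ↥H₀ᗮ :=
    (Submodule.orthogonalProjection H₀ᗮ).toLinearMap ∘ₗ St.domain.subtype with hp
  have hsurj : LinearMap.range p = ⊤ := by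
    have hdr : DenseRange (⇑p) := by
      have h1 : DenseRange (Subtype.val : ↥St.domain → H) := hdSt.denseRange_val
      have h2 : Function.Surjective (⇑(Submodule.orthogonalProjection H₀ᗮ)) := by
        intro y; exact ⟨(y : H), Submodule.orthogonalProjectionOnto_mem_subspace_eq_self y⟩
      exact h2.denseRange.comp h1 (Submodule.orthogonalProjection H₀ᗮ).continuous
    have hclosed : IsClosed ((LinearMap.range p : Submodule ℂ ↥H₀ᗮ) : Set ↥H₀ᗮ) :=
      Submodule.closed_of_finiteDimensional _
    apply SetLike.ext'
    have h3 : (LinearMap.range p : Set ↥H₀ᗮ) = Set.range ⇑p := LinearMap.coe_range p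
    rw [h3] at hclosed ⊢
    rw [← hclosed.closure_eq, hdr.closure_eq]
    simp
  obtain ⟨σ, hσ⟩ := p.exists_rightInverse_of_surjective hsurj
  exact ⟨σ, fun y => by
    have := LinearMap.congr_fun hσ y
    simpa [hp] using this⟩

/-- **Stenger's lemma.** If `S̃` is a selfadjoint operator in a complex Hilbert
space `H` and `H₀` is a closed subspace of `H` with finite-dimensional orthogonal complement,
then the compression of `S̃` to `H₀` is a selfadjoint operator in the Hilbert space `H₀`. -/
theorem stenger_isSelfAdjoint_compression
    (St : H →ₗ.[ℂ] H) (hsa : IsSelfAdjoint St)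
    (H₀ : Submodule ℂ H) [CompleteSpace H₀]
    (hfin : FiniteDimensional ℂ ↥H₀ᗮ) :
    IsSelfAdjoint (compression H₀ St) := by
  classical
  have hdSt : Dense (St.domain : Set H) := hsa.dense_domain
  have hsaEq : St.adjoint = St := LinearPMap.isSelfAdjoint_def.mp hsa
  obtain ⟨σ, hσ⟩ := exists_sigma St H₀ hfin hdSt
  set S₀ := compression H₀ St with hS₀def
  -- the correction map L
  set L : H →L[ℂ] H :=
      (LinearMap.toContinuousLinearMap (St.domain.subtype ∘ₗ σ)).comp
        ((Submodule.orthogonalProjection H₀ᗮ)) with hLdef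
  have hLval : ∀ x : H, L x = ((σ (Submodule.orthogonalProjection H₀ᗮ x) : ↥St.domain) : H) := by
    intro x; simp [hLdef]
  have hLdom : ∀ x : H, L x ∈ St.domain := fun x => by rw [hLval]; exact (σ _).2
  have hπmem : ∀ x : H, x - L x ∈ H₀ := by
    intro x
    have h1 : Submodule.orthogonalProjection H₀ᗮ (x - L x) = 0 := by
      rw [map_sub, hLval, hσ, sub_self]
    have h2 := Submodule.sub_starProjection_mem_orthogonal (K := H₀ᗮ) (x - L x)
    rw [Submodule.starProjection_apply, show H₀ᗮ.orthogonalProjectionOnto (x - L x) = 0 from h1] at h2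
    rw [← Submodule.orthogonal_orthogonal H₀]
    simpa using h2
  have hL0 : ∀ m : H, m ∈ H₀ → L m = 0 := by
    intro m hm
    rw [hLval]
    have h1 : Submodule.orthogonalProjection H₀ᗮ m = 0 :=
      Submodule.orthogonalProjectionOnto_apply_of_mem_orthogonal
        (by rw [Submodule.orthogonal_orthogonal]; exact hm)
    rw [h1, map_zero]; rfl
  -- density of the domain of the compression
  have hdense : Dense ((S₀.domain : Submodule ℂ ↥H₀) : Set ↥H₀) := by
    set φ : H →L[ℂ] ↥H₀ :=
      (ContinuousLinearMap.id ℂ H - L).codRestrict H₀ (fun x => by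
        simpa using hπmem x) with hφdef
    have hφval : ∀ x : H, (φ x : H) = x - L x := fun x => rfl
    intro v
    have hv : (v : H) ∈ closure (St.domain : Set H) := hdSt _
    have h1 : φ (v : H) ∈ closure (φ '' (St.domain : Set H)) :=
      mem_closure_image (φ.continuous.continuousAt) hv
    have h2 : φ (v : H) = v := by
      apply Subtype.ext
      rw [hφval, hL0 _ v.2, sub_zero]
    have h3 : φ '' (St.domain : Set H) ⊆ (S₀.domain : Set ↥H₀) := by
      rintro - ⟨x, hx, rfl⟩
      show (φ x : H) ∈ St.domain
      rw [hφval]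
      exact St.domain.sub_mem hx (hLdom x)
    rw [h2] at h1
    exact closure_mono h3 h1
  -- symmetry of St
  have hSymSt : ∀ x y : ↥St.domain, ⟪St x, (y : H)⟫ = ⟪(x : H), St y⟫ := by
    have h := LinearPMap.adjoint_isFormalAdjoint (T := St) hdSt
    rw [hsaEq] at h
    exact fun x y => h x y
  -- inner products with the projection
  have hinnerP : ∀ (v : ↥H₀) (z : H),
      ⟪(v : H), ((Submodule.orthogonalProjection H₀ z : ↥H₀) : H)⟫ = ⟪(v : H), z⟫ := by
    intro v z
    have h := Submodule.sub_starProjection_mem_orthogonal (K := H₀) z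
    have h2 := (Submodule.mem_orthogonal _ _).mp h (v : H) v.2
    rw [inner_sub_right, sub_eq_zero] at h2
    exact h2.symm
  have hinnerP' : ∀ (v : ↥H₀) (z : H),
      ⟪((Submodule.orthogonalProjection H₀ z : ↥H₀) : H), (v : H)⟫ = ⟪z, (v : H)⟫ := by
    intro v z
    rw [← inner_conj_symm, hinnerP, inner_conj_symm]
  -- symmetry of the compression
  have hsym : S₀.IsFormalAdjoint S₀ := by
    intro x y
    rw [Submodule.coe_inner, Submodule.coe_inner, compression_apply, compression_apply,
      hinnerP' ((y : ↥H₀)) _, hinnerP ((x : ↥H₀)) _]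
    exact hSymSt ⟨(x : H), x.2⟩ ⟨(y : H), y.2⟩
  have hle : S₀ ≤ S₀.adjoint := hsym.le_adjoint hdense
  -- the key step: every element of the domain of the adjoint is in the domain of S₀,
  -- with matching values
  have hkey : ∀ v : ↥S₀.adjoint.domain, ∃ hv : ((v : ↥H₀) : H) ∈ St.domain,
      St ⟨((v : ↥H₀) : H), hv⟩ = ((S₀.adjoint v : ↥H₀) : H) +
        ((((InnerProductSpace.toDual ℂ ↥H₀ᗮ).symm (LinearMap.toContinuousLinearMap
          ((innerₛₗ ℂ (((v : ↥H₀) : H))).comp (St.toFun ∘ₗ σ) -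
            (innerₛₗ ℂ (((S₀.adjoint v : ↥H₀) : H))).comp (St.domain.subtype ∘ₗ σ)))) : ↥H₀ᗮ) : H) := by
    intro v
    set w : ↥H₀ := S₀.adjoint v with hwdef
    set k : ↥H₀ᗮ →ₗ[ℂ] ℂ :=
      (innerₛₗ ℂ (((v : ↥H₀) : H))).comp (St.toFun ∘ₗ σ) -
        (innerₛₗ ℂ ((w : H))).comp (St.domain.subtype ∘ₗ σ) with hkdef
    set u : ↥H₀ᗮ :=
      (InnerProductSpace.toDual ℂ ↥H₀ᗮ).symm (LinearMap.toContinuousLinearMap k) with hudef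
    have hu : ∀ y : ↥H₀ᗮ, ⟪u, y⟫ = k y := by
      intro y
      rw [hudef, InnerProductSpace.toDual_symm_apply]
      rfl
    have hw : ∀ x : ↥S₀.domain, ⟪(w : H), ((x : ↥H₀) : H)⟫ = ⟪((v : ↥H₀) : H), St.toFun ⟨((x : ↥H₀) : H), x.2⟩⟫ := by
      intro x
      have h := LinearPMap.adjoint_isFormalAdjoint (T := S₀) hdense v x
      rw [Submodule.coe_inner, Submodule.coe_inner, compression_apply, hinnerP] at h
      exact h
    -- the main inner product identity
    have main : ∀ x : ↥St.domain, ⟪(w : H) + (u : H), (x : H)⟫ = ⟪((v : ↥H₀) : H), St x⟫ := by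
      intro x
      set y : ↥H₀ᗮ := Submodule.orthogonalProjection H₀ᗮ (x : H) with hydef
      have hx1 : (x : H) - L (x : H) ∈ St.domain := St.domain.sub_mem x.2 (hLdom _)
      have hx0 : (x : H) - L (x : H) ∈ H₀ := hπmem _
      have hLx : L (x : H) = ((σ y : ↥St.domain) : H) := hLval _
      have hxdecomp : x = (⟨(x : H) - L (x : H), hx1⟩ : ↥St.domain) + σ y := by
        apply Subtype.ext
        rw [Submodule.coe_add]
        show (x : H) = ((x : H) - L (x:H)) + ((σ y : ↥St.domain) : H)
        rw [← hLx]; abel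
      have hSx : St x = St.toFun (⟨(x : H) - L (x : H), hx1⟩ : ↥St.domain) + St.toFun (σ y) := by
        have h := congrArg St.toFun hxdecomp
        rw [map_add] at h
        exact h
      -- first summand
      have hfirst : ⟪((v : ↥H₀) : H), St.toFun (⟨(x : H) - L (x : H), hx1⟩ : ↥St.domain)⟫
          = ⟪(w : H), (x : H) - L (x : H)⟫ := by
        have := hw ⟨⟨(x : H) - L (x : H), hx0⟩, hx1⟩
        exact this.symm
      rw [hSx, inner_add_right, hfirst]
      have husplit : ⟪(u : H), (x : H)⟫ = ⟪((v : ↥H₀) : H), St.toFun (σ y)⟫ - ⟪(w : H), ((σ y : ↥St.domain) : H)⟫ := by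
        have h1 : ⟪(u : H), (x : H)⟫ = ⟪(u : H), ((y : ↥H₀ᗮ) : H)⟫ := by
          have hmem := Submodule.sub_starProjection_mem_orthogonal (K := H₀ᗮ) (x : H)
          have h2 := (Submodule.mem_orthogonal _ _).mp hmem (u : H) u.2
          rw [inner_sub_right, sub_eq_zero] at h2
          rw [Submodule.starProjection_apply] at h2
          exact h2
        rw [h1, ← Submodule.coe_inner, hu y, hkdef]
        simp
      rw [inner_add_left, husplit, inner_sub_right, ← hLx]
      ring
    have hvdom : ((v : ↥H₀) : H) ∈ St.adjoint.domain :=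
      St.mem_adjoint_domain_of_exists _ ⟨(w : H) + (u : H), main⟩
    have hvdom' : ((v : ↥H₀) : H) ∈ St.domain := by rw [← hsaEq]; exact hvdom
    refine ⟨hvdom', ?_⟩
    -- value of St at v via density
    apply hdSt.eq_of_inner_left ℂ
    intro z hz
    exact (hSymSt ⟨((v : ↥H₀) : H), hvdom'⟩ ⟨z, hz⟩).trans (main ⟨z, hz⟩).symm
  -- assembling
  have hge : S₀.adjoint ≤ S₀ := by
    constructor
    · intro v hv
      obtain ⟨hv', -⟩ := hkey ⟨v, hv⟩
      exact hv'
    · intro x y hxy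
      obtain ⟨hv', hval⟩ := hkey x
      show S₀.adjoint x = S₀ y
      rw [compression_apply]
      have hyx : ((y : ↥H₀) : H) = ((x : ↥H₀) : H) := by rw [← hxy]
      have : St.toFun ⟨((y : ↥H₀) : H), y.2⟩ = St.toFun ⟨((x : ↥H₀) : H), hv'⟩ := by
        congr 1
        exact Subtype.ext hyx
      rw [this]
      have hval' : St.toFun ⟨((x : ↥H₀) : H), hv'⟩ = ((S₀.adjoint x : ↥H₀) : H) + _ := hval
      rw [hval', map_add]
      rw [Submodule.orthogonalProjectionOnto_mem_subspace_eq_self (K := H₀) (S₀.adjoint x)]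
      rw [Submodule.orthogonalProjectionOnto_apply_of_mem_orthogonal (by exact Submodule.coe_mem _)]
      rw [add_zero]
  exact LinearPMap.eq_of_le_of_domain_eq hge (le_antisymm hge.1 hle.1)
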